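/- Let E = [t]ₓ R be an essential matrix with R ∈ SO(3), t ∈ ℝ³, and let τ = tr R. Then (1/2)(τ² − 1) tr(E Eᵀ) + (τ + 1) tr(E²) − τ (tr E)² = 0. -/
import Mathlib


open Matrix Real

set_option maxRecDepth 100000
set_option maxHeartbeats 4000000

def skew (v : Fin 3 → ℝ) : Matrix (Fin 3) (Fin 3) ℝ :=
  !![0, -v 2, v 1; v 2, 0, -v 0; -v 1, v 0, 0]

def quatRot (σ : ℝ) (u : Fin 3 → ℝ) : Matrix (Fin 3) (Fin 3) ℝ :=
  (2 : ℝ) • (vecMulVec u u - σ • skew u) + (σ ^ 2 - u ⬝ᵥ u) • (1 : Matrix (Fin 3) (Fin 3) ℝ)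

noncomputable def rodrigues (θ : ℝ) (r : Fin 3 → ℝ) : Matrix (Fin 3) (Fin 3) ℝ :=
  Real.cos θ • (1 : Matrix (Fin 3) (Fin 3) ℝ) + Real.sin θ • skew r
    + (1 - Real.cos θ) • vecMulVec r r

lemma key_poly (r00 r01 r02 r10 r11 r12 r20 r21 r22 t0 t1 t2 : ℝ)
    (hO00 : r00 * r00 + r10 * r10 + r20 * r20 = 1)
    (hO01 : r00 * r01 + r10 * r11 + r20 * r21 = 0)
    (hO02 : r00 * r02 + r10 * r12 + r20 * r22 = 0)
    (hO11 : r01 * r01 + r11 * r11 + r21 * r21 = 1)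
    (hO12 : r01 * r02 + r11 * r12 + r21 * r22 = 0)
    (hO22 : r02 * r02 + r12 * r12 + r22 * r22 = 1)
    (hP00 : r00 * r00 + r01 * r01 + r02 * r02 = 1)
    (hP01 : r00 * r10 + r01 * r11 + r02 * r12 = 0)
    (hP02 : r00 * r20 + r01 * r21 + r02 * r22 = 0)
    (hP11 : r10 * r10 + r11 * r11 + r12 * r12 = 1)
    (hP12 : r10 * r20 + r11 * r21 + r12 * r22 = 0)
    (hD : r00 * r11 * r22 - r00 * r12 * r21 - r01 * r10 * r22 + r01 * r12 * r20 + r02 * r10 * r21 - r02 * r11 * r20 = 1)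
    (hA00 : (-1) * r12 * r21 + r11 * r22 = r00)
    (hA01 : r02 * r21 + (-1) * r01 * r22 = r10)
    (hA02 : (-1) * r02 * r11 + r01 * r12 = r20) :
    (-1/2) * r22 * r22 * t1 * t1 + (-1/2) * r22 * r22 * t0 * t0 + (1/2) * r22 * r22 * r22 * r22 * t1 * t1 + (1/2) * r22 * r22 * r22 * r22 * t0 * t0 + (-1/2) * r21 * r21 * t1 * t1 + (1/2) * r21 * r21 * t0 * t0 + (1/2) * r21 * r21 * r22 * r22 * t1 * t1 + (1/2) * r21 * r21 * r22 * r22 * t0 * t0 + (-2) * r20 * r21 * t0 * t1 + (1/2) * r20 * r20 * t1 * t1 + (-1/2) * r20 * r20 * t0 * t0 + (1/2) * r20 * r20 * r22 * r22 * t1 * t1 + (1/2) * r20 * r20 * r22 * r22 * t0 * t0 + r12 * r22 * t1 * t2 + (-1) * r12 * r22 * r22 * r22 * t1 * t2 + 2 * r12 * r21 * r22 * t0 * t0 + (-2) * r12 * r20 * r22 * t0 * t1 + (-1/2) * r12 * r12 * t2 * t2 + (1/2) * r12 * r12 * t0 * t0 + (1/2) * r12 * r12 * r22 * r22 * t2 *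 t2 + (1/2) * r12 * r12 * r22 * r22 * t0 * t0 + (-2) * r11 * r22 * t0 * t0 + (-2) * r11 * r22 * r22 * t0 * t0 + r11 * r22 * r22 * r22 * t1 * t1 + r11 * r22 * r22 * r22 * t0 * t0 + r11 * r21 * t1 * t2 + (-1) * r11 * r21 * r22 * r22 * t1 * t2 + r11 * r21 * r21 * r22 * t1 * t1 + r11 * r21 * r21 * r22 * t0 * t0 + 2 * r11 * r20 * t0 * t2 + 2 * r11 * r20 * r22 * t0 * t2 + r11 * r20 * r20 * r22 * t1 * t1 + r11 * r20 * r20 * r22 * t0 * t0 + (-2) * r11 * r12 * r22 * r22 * t1 * t2 + 2 * r11 * r12 * r21 * t0 * t0 + (-2) * r11 * r12 * r20 * t0 * t1 + r11 * r12 * r12 * r22 * t2 * t2 + r11 * r12 * r12 * r22 * t0 * t0 + (-1/2) * r11 * r11 * t2 * t2 + (-1/2) * r11 * r11 * t0 * t0 + (-2) * r11 * r11 * r22 * t0 * t0 + (1/2) * r11 * r11 * r22 * r22 * t2 * t2 + (1/2) * r11 * r11 * r22 * r22 * t1 * t1 + r11 * r11 * r22 * r22 * t0 * t0 + (-2) *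 r11 * r11 * r21 * r22 * t1 * t2 + (1/2) * r11 * r11 * r21 * r21 * t1 * t1 + (1/2) * r11 * r11 * r21 * r21 * t0 * t0 + 2 * r11 * r11 * r20 * t0 * t2 + (1/2) * r11 * r11 * r20 * r20 * t1 * t1 + (1/2) * r11 * r11 * r20 * r20 * t0 * t0 + (-1) * r11 * r11 * r12 * r22 * t1 * t2 + (1/2) * r11 * r11 * r12 * r12 * t2 * t2 + (1/2) * r11 * r11 * r12 * r12 * t0 * t0 + r11 * r11 * r11 * r22 * t2 * t2 + r11 * r11 * r11 * r22 * t0 * t0 + (-1) * r11 * r11 * r11 * r21 * t1 * t2 + (1/2) * r11 * r11 * r11 * r11 * t2 * t2 + (1/2) * r11 * r11 * r11 * r11 * t0 * t0 + 2 * r10 * r22 * t0 * t1 + 2 * r10 * r22 * r22 * t0 * t1 + (-2) * r10 * r21 * r22 * t0 * t2 + (-1) * r10 * r20 * t1 * t2 + (-1) * r10 * r20 * r22 * r22 * t1 * t2 + (-2) * r10 * r12 * t0 * t2 + 2 * r10 * r11 * r22 * t0 * t1 + (-2) * r10 * r11 * r21 * t0 * t2 + (-2) * r10 * r11 * r20 *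 r22 * t1 * t2 + (-1) * r10 * r11 * r11 * r20 * t1 * t2 + (1/2) * r10 * r10 * t2 * t2 + (-1/2) * r10 * r10 * t0 * t0 + (1/2) * r10 * r10 * r22 * r22 * t2 * t2 + (1/2) * r10 * r10 * r22 * r22 * t0 * t0 + r10 * r10 * r11 * r22 * t2 * t2 + r10 * r10 * r11 * r22 * t0 * t0 + (1/2) * r10 * r10 * r11 * r11 * t2 * t2 + (1/2) * r10 * r10 * r11 * r11 * t0 * t0 + r02 * r22 * t0 * t2 + (-1) * r02 * r22 * r22 * r22 * t0 * t2 + (-2) * r02 * r21 * r22 * t0 * t1 + 2 * r02 * r20 * r22 * t1 * t1 + (-1) * r02 * r12 * t0 * t1 + (-1) * r02 * r12 * r22 * r22 * t0 * t1 + 2 * r02 * r11 * t0 * t2 + 2 * r02 * r11 * r22 * t0 * t2 + (-2) * r02 * r11 * r22 * r22 * t0 * t2 + (-2) * r02 * r11 * r21 * t0 * t1 + 2 * r02 * r11 * r20 * t1 * t1 + (-2) * r02 * r11 * r12 * r22 * t0 * t1 + 2 * r02 * r11 * r11 * t0 * t2 + (-1) * r02 * r11 * r11 * r22 * t0 * t2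 + (-1) * r02 * r11 * r11 * r12 * t0 * t1 + (-2) * r02 * r10 * r22 * t1 * t2 + (-2) * r02 * r10 * r11 * t1 * t2 + (-1/2) * r02 * r02 * t2 * t2 + (1/2) * r02 * r02 * t1 * t1 + (1/2) * r02 * r02 * r22 * r22 * t2 * t2 + (1/2) * r02 * r02 * r22 * r22 * t1 * t1 + r02 * r02 * r11 * r22 * t2 * t2 + r02 * r02 * r11 * r22 * t1 * t1 + (1/2) * r02 * r02 * r11 * r11 * t2 * t2 + (1/2) * r02 * r02 * r11 * r11 * t1 * t1 + 2 * r01 * r22 * t0 * t1 + 2 * r01 * r22 * r22 * t0 * t1 + (-1) * r01 * r21 * t0 * t2 + (-1) * r01 * r21 * r22 * r22 * t0 * t2 + (-2) * r01 * r20 * r22 * t1 * t2 + (-2) * r01 * r12 * r22 * t0 * t2 + r01 * r11 * t0 * t1 + 2 * r01 * r11 * r22 * t0 * t1 + (-1) * r01 * r11 * r22 * r22 * t0 * t1 + (-2) * r01 * r11 * r21 * r22 * t0 * t2 + (-2) * r01 * r11 * r20 * t1 * t2 + (-2) * r01 * r11 * r12 * t0 * t2 + (-2) * r01 * r11 * r11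 * r22 * t0 * t1 + (-1) * r01 * r11 * r11 * r21 * t0 * t2 + (-1) * r01 * r11 * r11 * r11 * t0 * t1 + 2 * r01 * r10 * r22 * t2 * t2 + 2 * r01 * r10 * r11 * t2 * t2 + (-2) * r01 * r02 * t1 * t2 + (1/2) * r01 * r01 * t2 * t2 + (-1/2) * r01 * r01 * t1 * t1 + (1/2) * r01 * r01 * r22 * r22 * t2 * t2 + (1/2) * r01 * r01 * r22 * r22 * t1 * t1 + r01 * r01 * r11 * r22 * t2 * t2 + r01 * r01 * r11 * r22 * t1 * t1 + (1/2) * r01 * r01 * r11 * r11 * t2 * t2 + (1/2) * r01 * r01 * r11 * r11 * t1 * t1 + (-2) * r00 * r22 * t1 * t1 + (-2) * r00 * r22 * r22 * t1 * t1 + r00 * r22 * r22 * r22 * t1 * t1 + r00 * r22 * r22 * r22 * t0 * t0 + 2 * r00 * r21 * t1 * t2 + 2 * r00 * r21 * r22 * t1 * t2 + r00 * r21 * r21 * r22 * t1 * t1 + r00 * r21 * r21 * r22 * t0 * t0 + r00 * r20 * t0 * t2 + (-1) * r00 * r20 * r22 * r22 * t0 * t2 + r00 * r20 * r20 * r22 *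 t1 * t1 + r00 * r20 * r20 * r22 * t0 * t0 + 2 * r00 * r12 * t1 * t2 + 2 * r00 * r12 * r22 * t1 * t2 + (-2) * r00 * r12 * r22 * r22 * t1 * t2 + 2 * r00 * r12 * r21 * t0 * t0 + (-2) * r00 * r12 * r20 * t0 * t1 + r00 * r12 * r12 * r22 * t2 * t2 + r00 * r12 * r12 * r22 * t0 * t0 + (-2) * r00 * r11 * t2 * t2 + (-2) * r00 * r11 * r22 * t2 * t2 + (-2) * r00 * r11 * r22 * t1 * t1 + (-2) * r00 * r11 * r22 * t0 * t0 + r00 * r11 * r22 * r22 * t1 * t1 + r00 * r11 * r22 * r22 * t0 * t0 + 2 * r00 * r11 * r21 * t1 * t2 + (-2) * r00 * r11 * r21 * r22 * t1 * t2 + r00 * r11 * r21 * r21 * t1 * t1 + r00 * r11 * r21 * r21 * t0 * t0 + 2 * r00 * r11 * r20 * t0 * t2 + (-2) * r00 * r11 * r20 * r22 * t0 * t2 + r00 * r11 * r20 * r20 * t1 * t1 + r00 * r11 * r20 * r20 * t0 * t0 + 2 * r00 * r11 * r12 * t1 * t2 + (-2) * r00 * r11 * r12 * r22 * t1 * t2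 + r00 * r11 * r12 * r12 * t2 * t2 + r00 * r11 * r12 * r12 * t0 * t0 + (-2) * r00 * r11 * r11 * t2 * t2 + r00 * r11 * r11 * r22 * t2 * t2 + r00 * r11 * r11 * r22 * t0 * t0 + (-2) * r00 * r11 * r11 * r21 * t1 * t2 + (-1) * r00 * r11 * r11 * r20 * t0 * t2 + r00 * r11 * r11 * r11 * t2 * t2 + r00 * r11 * r11 * r11 * t0 * t0 + r00 * r10 * t0 * t1 + 2 * r00 * r10 * r22 * t0 * t1 + (-1) * r00 * r10 * r22 * r22 * t0 * t1 + (-2) * r00 * r10 * r21 * t0 * t2 + (-2) * r00 * r10 * r20 * r22 * t1 * t2 + (-2) * r00 * r10 * r11 * r22 * t0 * t1 + (-2) * r00 * r10 * r11 * r20 * t1 * t2 + (-1) * r00 * r10 * r11 * r11 * t0 * t1 + r00 * r10 * r10 * r22 * t2 * t2 + r00 * r10 * r10 * r22 * t0 * t0 + r00 * r10 * r10 * r11 * t2 * t2 + r00 * r10 * r10 * r11 * t0 * t0 + (-2) * r00 * r02 * r22 * r22 * t0 * t2 + (-2) * r00 * r02 * r21 * t0 * t1 + 2 * r00 * r02 *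 r20 * t1 * t1 + (-2) * r00 * r02 * r12 * r22 * t0 * t1 + 2 * r00 * r02 * r11 * t0 * t2 + (-2) * r00 * r02 * r11 * r22 * t0 * t2 + (-2) * r00 * r02 * r11 * r12 * t0 * t1 + (-2) * r00 * r02 * r10 * t1 * t2 + r00 * r02 * r02 * r22 * t2 * t2 + r00 * r02 * r02 * r22 * t1 * t1 + r00 * r02 * r02 * r11 * t2 * t2 + r00 * r02 * r02 * r11 * t1 * t1 + 2 * r00 * r01 * r22 * t0 * t1 + (-2) * r00 * r01 * r21 * r22 * t0 * t2 + (-2) * r00 * r01 * r20 * t1 * t2 + (-2) * r00 * r01 * r12 * t0 * t2 + (-2) * r00 * r01 * r11 * r22 * t0 * t1 + (-2) * r00 * r01 * r11 * r21 * t0 * t2 + (-2) * r00 * r01 * r11 * r11 * t0 * t1 + 2 * r00 * r01 * r10 * t2 * t2 + r00 * r01 * r01 * r22 * t2 * t2 + r00 * r01 * r01 * r22 * t1 * t1 + r00 * r01 * r01 * r11 * t2 * t2 + r00 * r01 * r01 * r11 * t1 * t1 + (-1/2) * r00 * r00 * t2 * t2 + (-1/2) * r00 * r00 * t1 * t1 +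 (-2) * r00 * r00 * r22 * t1 * t1 + (1/2) * r00 * r00 * r22 * r22 * t2 * t2 + r00 * r00 * r22 * r22 * t1 * t1 + (1/2) * r00 * r00 * r22 * r22 * t0 * t0 + 2 * r00 * r00 * r21 * t1 * t2 + (1/2) * r00 * r00 * r21 * r21 * t1 * t1 + (1/2) * r00 * r00 * r21 * r21 * t0 * t0 + (-2) * r00 * r00 * r20 * r22 * t0 * t2 + (1/2) * r00 * r00 * r20 * r20 * t1 * t1 + (1/2) * r00 * r00 * r20 * r20 * t0 * t0 + 2 * r00 * r00 * r12 * t1 * t2 + (-1) * r00 * r00 * r12 * r22 * t1 * t2 + (1/2) * r00 * r00 * r12 * r12 * t2 * t2 + (1/2) * r00 * r00 * r12 * r12 * t0 * t0 + (-2) * r00 * r00 * r11 * t2 * t2 + r00 * r00 * r11 * r22 * t2 * t2 + r00 * r00 * r11 * r22 * t1 * t1 + (-1) * r00 * r00 * r11 * r21 * t1 * t2 + (-2) * r00 * r00 * r11 * r20 * t0 * t2 + r00 * r00 * r11 * r11 * t2 * t2 + (1/2) * r00 * r00 * r11 * r11 * t1 * t1 + (1/2) * r00 * r00 * r11 * r11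 * t0 * t0 + (-2) * r00 * r00 * r10 * r22 * t0 * t1 + (-1) * r00 * r00 * r10 * r20 * t1 * t2 + (-2) * r00 * r00 * r10 * r11 * t0 * t1 + (1/2) * r00 * r00 * r10 * r10 * t2 * t2 + (1/2) * r00 * r00 * r10 * r10 * t0 * t0 + (-1) * r00 * r00 * r02 * r22 * t0 * t2 + (-1) * r00 * r00 * r02 * r12 * t0 * t1 + (1/2) * r00 * r00 * r02 * r02 * t2 * t2 + (1/2) * r00 * r00 * r02 * r02 * t1 * t1 + (-1) * r00 * r00 * r01 * r21 * t0 * t2 + (-1) * r00 * r00 * r01 * r11 * t0 * t1 + (1/2) * r00 * r00 * r01 * r01 * t2 * t2 + (1/2) * r00 * r00 * r01 * r01 * t1 * t1 + r00 * r00 * r00 * r22 * t2 * t2 + r00 * r00 * r00 * r22 * t1 * t1 + (-1) * r00 * r00 * r00 * r20 * t0 * t2 + r00 * r00 * r00 * r11 * t2 * t2 + r00 * r00 * r00 * r11 * t1 * t1 + (-1) * r00 * r00 * r00 * r10 * t0 * t1 + (1/2) * r00 * r00 * r00 * r00 * t2 * t2 + (1/2) * r00 * r00 * r00 * r00 * t1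 * t1 = 0 := by
  linear_combination
      ((1/2) * t1 * t1 + (-1/2) * t0 * t0 + r22 * r22 * t2 * t2 + (3/2) * r22 * r22 * t1 * t1 + (1/2) * r22 * r22 * t0 * t0 + (1/2) * r21 * r21 * t2 * t2 + (3/2) * r21 * r21 * t1 * t1 + (-1) * r12 * r22 * t1 * t2 + r11 * r22 * t1 * t1 + r11 * r22 * t0 * t0 + (1/2) * r11 * r11 * t1 * t1 + (1/2) * r11 * r11 * t0 * t0 + (-2) * r02 * r11 * t0 * t2 + 2 * r01 * r12 * t0 * t2 + r00 * r22 * t1 * t1 + r00 * r22 * t0 * t0 + 2 * r00 * r21 * t1 * t2 + r00 * r11 * t1 * t1 + r00 * r11 * t0 * t0 + (1/2) * r00 * r00 * t1 * t1 + (1/2) * r00 * r00 * t0 * t0) * hO00 +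
      ((-2) * t0 * t1 + 4 * r22 * t0 * t1 + (-2) * r21 * t0 * t2 + (-1/2) * r20 * r21 * t2 * t2 + (-3/2) * r20 * r21 * t1 * t1 + r10 * r21 * t1 * t2 + (1/2) * r10 * r11 * t2 * t2 + (3/2) * r10 * r11 * t1 * t1 + (-2) * r02 * t1 * t2 + 2 * r02 * r10 * t0 * t2 + r00 * r21 * t0 * t2 + (-2) * r00 * r20 * t1 * t2 + (-2) * r00 * r12 * t0 * t2 + (1/2) * r00 * r01 * t2 * t2 + (3/2) * r00 * r01 * t1 * t1) * hO01 +
      ((-2) * r21 * t0 * t1 + (-1) * r20 * r22 * t2 * t2 + (-1) * r20 * r22 * t1 * t1 + (-2) * r12 * t0 * t1 + (-2) * r12 * r21 * t0 * t2 + r12 * r20 * t1 * t2 + 2 * r11 * t0 * t2 + 2 * r11 * r22 * t0 * t2 + r10 * r12 * t2 * t2 + r10 * r12 * t1 * t1 + (-2) * r10 * r11 * t1 * t2 + 2 * r02 * t1 * t1 + (-2) * r01 * r10 * t0 * t2 + (-1) * r00 * r22 * t0 * t2 + (-2) * r00 * r10 * t1 * t2 + r00 * r02 * t2 * t2 + r00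 * r02 * t1 * t1 + (-2) * r00 * r00 * t0 * t2) * hO02 +
      ((1/2) * t2 * t2 + t1 * t1 + (1/2) * t0 * t0 + 2 * r22 * t1 * t1 + (-1/2) * r22 * r22 * t2 * t2 + (-1) * r22 * r22 * t1 * t1 + (1/2) * r22 * r22 * t0 * t0 + 2 * r20 * t0 * t2 + (-2) * r12 * t1 * t2 + (-2) * r11 * r22 * t2 * t2 + (-1) * r11 * r22 * t1 * t1 + r11 * r22 * t0 * t0 + (1/2) * r11 * r11 * t1 * t1 + (1/2) * r11 * r11 * t0 * t0 + (-1) * r10 * r20 * t1 * t2 + (-1/2) * r10 * r10 * t2 * t2 + (-3/2) * r10 * r10 * t1 * t1 + 2 * r02 * t0 * t2 + (-1) * r02 * r22 * t0 * t2 + (-2) * r01 * r22 * t0 * t1 + (-2) * r01 * r12 * t0 * t2 + 2 * r01 * r02 * t1 * t2 + r00 * r22 * t1 * t1 + r00 * r22 * t0 * t0 + (-1) * r00 * r20 * t0 * t2 + r00 * r11 * t1 * t1 + r00 * r11 * t0 * t0 + (-1/2) * r00 * r00 * t2 * t2 + (-1) * r00 * r00 * t1 * t1 + (1/2) * r00 *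 r00 * t0 * t0) * hO11 +
      (2 * r22 * t1 * t2 + (-2) * r21 * t1 * t1 + (1/2) * r21 * r22 * t2 * t2 + (3/2) * r21 * r22 * t1 * t1 + (-2) * r20 * t0 * t1 + (-2) * r12 * t2 * t2 + 2 * r12 * r20 * t0 * t2 + 2 * r11 * t1 * t2 + (-2) * r11 * r22 * t1 * t2 + 2 * r11 * r21 * t2 * t2 + 2 * r11 * r21 * t1 * t1 + (3/2) * r11 * r12 * t2 * t2 + (1/2) * r11 * r12 * t1 * t1 + (-2) * r11 * r11 * t1 * t2 + (-2) * r10 * t0 * t2 + (-2) * r10 * r22 * t0 * t2 + r02 * r21 * t0 * t2 + (-2) * r01 * t0 * t2 + (-3) * r01 * r22 * t0 * t2 + 2 * r01 * r21 * t0 * t1 + 2 * r01 * r12 * t0 * t1 + (3/2) * r01 * r02 * t2 * t2 + (-3/2) * r01 * r02 * t1 * t1 + (-2) * r01 * r01 * t1 * t2 + 2 * r00 * t1 * t2 + (-2) * r00 * r22 * t1 * t2 + (-2) * r00 * r11 * t1 * t2 + (-2) * r00 * r01 * t0 * t2) * hO12 +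
      ((1/2) * t2 * t2 + (1/2) * t1 * t1 + t0 * t0 + (1/2) * r22 * r22 * t1 * t1 + (1/2) * r22 * r22 * t0 * t0 + (-2) * r21 * t1 * t2 + (-1) * r12 * r22 * t1 * t2 + (1/2) * r12 * r12 * t2 * t2 + (-1/2) * r12 * r12 * t1 * t1 + 2 * r11 * t2 * t2 + r11 * r22 * t1 * t1 + r11 * r22 * t0 * t0 + r11 * r21 * t1 * t2 + (-2) * r11 * r20 * t0 * t2 + (-2) * r11 * r12 * t1 * t2 + (-1) * r11 * r11 * t2 * t2 + (-1/2) * r11 * r11 * t1 * t1 + (1/2) * r11 * r11 * t0 * t0 + 2 * r10 * t0 * t1 + 2 * r10 * r21 * t0 * t2 + (-1) * r10 * r20 * t1 * t2 + (-1/2) * r10 * r10 * t2 * t2 + (-3/2) * r10 * r10 * t1 * t1 + (-1) * r02 * r22 * t0 * t2 + (-1) * r02 * r12 * t0 * t1 + (-2) * r02 * r11 * t0 * t2 + (1/2) * r02 * r02 * t2 * t2 + (-1/2) * r02 * r02 * t0 * t0 + 2 * r01 * r21 * t0 * t2 + (-3) * r01 * r11 * t0 * t1 + (-1) * r01 * r01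 * t2 * t2 + (3/2) * r01 * r01 * t1 * t1 + (-1/2) * r01 * r01 * t0 * t0 + (-2) * r00 * t1 * t1 + r00 * r22 * t1 * t1 + r00 * r22 * t0 * t0 + 2 * r00 * r21 * t1 * t2 + (-2) * r00 * r12 * t1 * t2 + r00 * r11 * t1 * t1 + r00 * r11 * t0 * t0 + (-1) * r00 * r10 * t0 * t1 + (-2) * r00 * r02 * t0 * t2 + (-1/2) * r00 * r00 * t2 * t2 + (-1/2) * r00 * r00 * t1 * t1) * hO22 +
      ((-1) * t2 * t2 + (-1) * t0 * t0 + (-2) * r22 * t1 * t1 + 2 * r21 * t1 * t2 + 2 * r12 * t1 * t2 + r12 * r12 * t2 * t2 + (1/2) * r12 * r12 * t1 * t1 + (1/2) * r12 * r12 * t0 * t0 + (-2) * r11 * t2 * t2 + r11 * r22 * t2 * t2 + (-1) * r11 * r22 * t0 * t0 + (-1) * r11 * r21 * t1 * t2 + (3/2) * r11 * r11 * t2 * t2 + r11 * r11 * t1 * t1 + (-1/2) * r11 * r11 * t0 * t0 + (-2) * r10 * t0 * t1 + r10 * r20 * t1 * t2 + (1/2) * r10 * r10 * t2 * t2 + (3/2)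 * r10 * r10 * t1 * t1 + r02 * r22 * t0 * t2 + r02 * r12 * t0 * t1 + 2 * r02 * r11 * t0 * t2 + (-1/2) * r02 * r02 * t2 * t2 + (1/2) * r02 * r02 * t0 * t0 + (-1) * r01 * r21 * t0 * t2 + r01 * r11 * t0 * t1 + r00 * r22 * t2 * t2 + (-1) * r00 * r22 * t0 * t0 + (-2) * r00 * r21 * t1 * t2 + r00 * r11 * t2 * t2 + (-1) * r00 * r11 * t0 * t0 + r00 * r10 * t0 * t1 + 2 * r00 * r02 * t0 * t2 + (1/2) * r00 * r00 * t2 * t2 + (-1/2) * r00 * r00 * t0 * t0) * hP00 +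
      ((-1) * t0 * t1 + 2 * r22 * t0 * t1 + (-2) * r21 * t0 * t2 + r12 * r22 * t0 * t2 + r12 * r12 * t0 * t1 + (-2) * r11 * r22 * t0 * t1 + (-1) * r11 * r21 * t0 * t2 + 2 * r11 * r12 * t0 * t2 + (-1) * r11 * r11 * t0 * t1 + (-2) * r10 * t1 * t1 + (-2) * r02 * t1 * t2 + r02 * r22 * t1 * t2 + (-2) * r02 * r12 * t2 * t2 + 2 * r02 * r11 * t1 * t2 + 2 * r01 * t2 * t2 + (-1) * r01 * r11 * t2 * t2 + (-1) * r01 * r11 * t1 * t1 + (-1) * r01 * r01 * t0 * t1 + 2 * r00 * t0 * t1 + (-2) * r00 * r22 * t0 * t1 + (-1) * r00 * r20 * t1 * t2 + 2 * r00 * r12 * t0 * t2 + (-2) * r00 * r11 * t0 * t1 + (-2) * r00 * r10 * t1 * t1 + 2 * r00 * r02 * t1 * t2 + (-2) * r00 * r00 * t0 * t1) * hP01 +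
      ((-2) * r12 * t0 * t1 + 2 * r11 * t0 * t2 + (-2) * r10 * t1 * t2 + 2 * r02 * t1 * t1 + (-2) * r01 * t1 * t2 + r01 * r11 * t1 * t2 + r01 * r01 * t0 * t2 + (-2) * r00 * r11 * t0 * t2 + (-1) * r00 * r10 * t1 * t2 + 2 * r00 * r01 * t1 * t2 + (-1) * r00 * r00 * t0 * t2) * hP02 +
      (r12 * r22 * t1 * t2 + (-1/2) * r12 * r12 * t2 * t2 + (1/2) * r12 * r12 * t1 * t1 + r11 * r22 * t2 * t2 + (-1) * r11 * r22 * t1 * t1 + (-1) * r11 * r21 * t1 * t2 + 2 * r11 * r12 * t1 * t2 + (1/2) * r11 * r11 * t2 * t2 + (-1/2) * r11 * r11 * t1 * t1 + 2 * r00 * t1 * t1 + r00 * r22 * t2 * t2 + (-1) * r00 * r22 * t1 * t1 + (-2) * r00 * r21 * t1 * t2 + 2 * r00 * r12 * t1 * t2 + r00 * r11 * t2 * t2 + (-1) * r00 * r11 * t1 * t1) * hP11 +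
      (2 * r00 * t1 * t2) * hP12 +
      ((-2) * t1 * t1 + (-2) * r20 * t0 * t2 + (-2) * r02 * t0 * t2) * hD +
      ((-2) * r22 * t2 * t2 + (-2) * r22 * t0 * t0 + (-2) * r21 * t1 * t2 + (-2) * r12 * t1 * t2 + (-2) * r11 * t1 * t1 + (-2) * r11 * t0 * t0 + 2 * r11 * r22 * t2 * t2 + 2 * r11 * r22 * t1 * t1 + 2 * r11 * r11 * t2 * t2 + 2 * r11 * r11 * t1 * t1 + (-2) * r10 * t0 * t1 + (-2) * r01 * t0 * t1 + 2 * r01 * r22 * t0 * t1 + (-2) * r01 * r21 * t0 * t2 + 2 * r01 * r12 * t0 * t2 + 2 * r01 * r11 * t0 * t1 + 2 * r00 * t1 * t1 + (-2) * r00 * t0 * t0) * hA00 +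
      ((-2) * r22 * t0 * t1 + (-2) * r21 * t0 * t2 + 2 * r20 * t1 * t2 + 2 * r12 * t0 * t2 + (-2) * r11 * t0 * t1 + 2 * r10 * t1 * t1 + (-2) * r01 * r22 * t2 * t2 + (-2) * r01 * r21 * t1 * t2 + (-2) * r01 * r11 * t2 * t2 + (-2) * r01 * r11 * t1 * t1 + (-2) * r01 * r02 * t0 * t2 + (-2) * r01 * r01 * t0 * t1) * hA01 +
      ((-2) * r01 * r12 * t1 * t1 + 2 * r01 * r11 * t1 * t2 + (-2) * r01 * r02 * t0 * t1 + 2 * r01 * r01 * t0 * t2) * hA02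


theorem essential_angle_constraint (R : Matrix (Fin 3) (Fin 3) ℝ) (t : Fin 3 → ℝ)
    (hR : Rᵀ * R = 1) (hRdet : R.det = 1) :
    let E := skew t * R
    let τ := R.trace
    (1 / 2 : ℝ) * (τ ^ 2 - 1) * (E * Eᵀ).trace + (τ + 1) * (E * E).trace
      - τ * E.trace ^ 2 = 0 := by
  have hR' : R * Rᵀ = 1 := mul_eq_one_comm.mp hR
  have hAdj : R.adjugate = Rᵀ := by
    calc R.adjugate = R.adjugate * (R * Rᵀ) := by rw [hR', mul_one]
    _ = (R.adjugate * R) * Rᵀ := by rw [mul_assoc]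
    _ = Rᵀ := by rw [adjugate_mul, hRdet, one_smul, one_mul]
  rw [Matrix.adjugate_fin_three] at hAdj
  have eO : ∀ a b : Fin 3, R 0 a * R 0 b + R 1 a * R 1 b + R 2 a * R 2 b = (1 : Matrix (Fin 3) (Fin 3) ℝ) a b := by
    intro a b
    have := congrFun (congrFun hR a) b
    simpa [Matrix.mul_apply, Fin.sum_univ_three, Matrix.transpose_apply] using this
  have eP : ∀ a b : Fin 3, R a 0 * R b 0 + R a 1 * R b 1 + R a 2 * R b 2 = (1 : Matrix (Fin 3) (Fin 3) ℝ) a b := by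
    intro a b
    have := congrFun (congrFun hR' a) b
    simpa [Matrix.mul_apply, Fin.sum_univ_three, Matrix.transpose_apply] using this
  have hO00 : R 0 0 * R 0 0 + R 1 0 * R 1 0 + R 2 0 * R 2 0 = 1 := by simpa using eO 0 0
  have hO01 : R 0 0 * R 0 1 + R 1 0 * R 1 1 + R 2 0 * R 2 1 = 0 := by simpa using eO 0 1
  have hO02 : R 0 0 * R 0 2 + R 1 0 * R 1 2 + R 2 0 * R 2 2 = 0 := by simpa using eO 0 2
  have hO11 : R 0 1 * R 0 1 + R 1 1 * R 1 1 + R 2 1 * R 2 1 = 1 := by simpa using eO 1 1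
  have hO12 : R 0 1 * R 0 2 + R 1 1 * R 1 2 + R 2 1 * R 2 2 = 0 := by simpa using eO 1 2
  have hO22 : R 0 2 * R 0 2 + R 1 2 * R 1 2 + R 2 2 * R 2 2 = 1 := by simpa using eO 2 2
  have hP00 : R 0 0 * R 0 0 + R 0 1 * R 0 1 + R 0 2 * R 0 2 = 1 := by simpa using eP 0 0
  have hP01 : R 0 0 * R 1 0 + R 0 1 * R 1 1 + R 0 2 * R 1 2 = 0 := by simpa using eP 0 1
  have hP02 : R 0 0 * R 2 0 + R 0 1 * R 2 1 + R 0 2 * R 2 2 = 0 := by simpa using eP 0 2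
  have hP11 : R 1 0 * R 1 0 + R 1 1 * R 1 1 + R 1 2 * R 1 2 = 1 := by simpa using eP 1 1
  have hP12 : R 1 0 * R 2 0 + R 1 1 * R 2 1 + R 1 2 * R 2 2 = 0 := by simpa using eP 1 2
  have hD : R 0 0 * R 1 1 * R 2 2 - R 0 0 * R 1 2 * R 2 1 - R 0 1 * R 1 0 * R 2 2
      + R 0 1 * R 1 2 * R 2 0 + R 0 2 * R 1 0 * R 2 1 - R 0 2 * R 1 1 * R 2 0 = 1 := by
    rw [Matrix.det_fin_three] at hRdet
    linear_combination hRdet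
  have hA00 : (-1) * R 1 2 * R 2 1 + R 1 1 * R 2 2 = R 0 0 := by
    have := congrFun (congrFun hAdj 0) 0
    simp [Matrix.transpose_apply] at this
    linear_combination this
  have hA01 : R 0 2 * R 2 1 + (-1) * R 0 1 * R 2 2 = R 1 0 := by
    have := congrFun (congrFun hAdj 0) 1
    simp [Matrix.transpose_apply] at this
    linear_combination this
  have hA02 : (-1) * R 0 2 * R 1 1 + R 0 1 * R 1 2 = R 2 0 := by
    have := congrFun (congrFun hAdj 0) 2
    simp [Matrix.transpose_apply] at this
    linear_combination this
  intro E τ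
  show (1 / 2 : ℝ) * (R.trace ^ 2 - 1) * ((skew t * R) * (skew t * R)ᵀ).trace
      + (R.trace + 1) * ((skew t * R) * (skew t * R)).trace
      - R.trace * (skew t * R).trace ^ 2 = 0
  simp only [Matrix.trace, Matrix.diag, Fin.sum_univ_three, Matrix.mul_apply,
    Matrix.transpose_apply, skew, Matrix.of_apply, Matrix.cons_val', Matrix.cons_val_zero, Matrix.cons_val_one,
    Matrix.head_cons, Matrix.empty_val', Matrix.cons_val_fin_one, Matrix.head_fin_const,
    Matrix.cons_val_two, Matrix.tail_cons]
  linear_combination key_poly (R 0 0) (R 0 1) (R 0 2) (R 1 0) (R 1 1) (R 1 2)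
      (R 2 0) (R 2 1) (R 2 2) (t 0) (t 1) (t 2)
      hO00 hO01 hO02 hO11 hO12 hO22 hP00 hP01 hP02 hP11 hP12 hD hA00 hA01 hA02
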